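/- Fix integers l ≥ 2 and n ≥ 1, and nonzero vectors x₁,…,xₙ, y₁,…,yₙ ∈ ℝ^{l+1}, with coordinates indexed 1,…,l+1. The following are equivalent: (i) for every i, the truncation (xᵢ,₂,…,xᵢ,ₗ₊₁) ∈ ℝ^l obtained by deleting the first coordinate of xᵢ is nonzero and satisfies (xᵢ,₂,…,xᵢ,ₗ₊₁) ∼ (yᵢ,₁,…,yᵢ,ₗ), where the latter is obtained by deleting the last coordinate of yᵢ; (ii) for every i there exists a vector zᵢ ∈ ℝ^{l+2}, not lying in span{e₁, e_{l+2}} (where e₁ and e_{l+2} are the first and last standard basis vectors of ℝ^{l+2}), such that (zᵢ,₁,…,zᵢ,ₗ₊₁) ∼ xᵢ and (zᵢ,₂,…,zᵢ,ₗ₊₂) ∼ yᵢ. -/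

import Mathlib

open Matrix

/-- `u ∼ v`: the vectors are equal up to a nonzero real scalar. -/
def Sim {k : ℕ} (u v : Fin k → ℝ) : Prop := ∃ c : ℝ, c ≠ 0 ∧ u = c • v

lemma span_pair_aux {m : ℕ} (z : Fin (m + 2) → ℝ)
    (h : ∀ k : Fin (m + 2), k ≠ 0 → k ≠ Fin.last (m + 1) → z k = 0) :
    z ∈ Submodule.span ℝ
      {Pi.single (0 : Fin (m + 2)) (1 : ℝ), Pi.single (Fin.last (m + 1)) (1 : ℝ)} := by
  rw [Submodule.mem_span_pair]
  refine ⟨z 0, z (Fin.last (m + 1)), funext fun k => ?_⟩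
  have hlast : (Fin.last (m + 1)) ≠ (0 : Fin (m + 2)) := by
    simp [Fin.ext_iff]
  by_cases h0 : k = 0
  · subst h0
    simp [Pi.single_apply, hlast]
  by_cases hL : k = Fin.last (m + 1)
  · subst hL
    simp [Pi.single_apply, hlast]
  · simp [Pi.single_apply, h0, hL, h k h0 hL]

lemma span_pair_aux2 {m : ℕ} (z : Fin (m + 2) → ℝ)
    (k : Fin (m + 2)) (hk0 : k ≠ 0) (hkL : k ≠ Fin.last (m + 1)) (hz : z k ≠ 0) :
    z ∉ Submodule.span ℝ
      {Pi.single (0 : Fin (m + 2)) (1 : ℝ), Pi.single (Fin.last (m + 1)) (1 : ℝ)} := by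
  intro hmem
  rw [Submodule.mem_span_pair] at hmem
  obtain ⟨a, b, hab⟩ := hmem
  have := congrFun hab k
  simp [Pi.single_apply, hk0, hkL] at this
  exact hz this.symm

/-- Lemma 3: the special case of Theorem 2 for the 0-1 projection matrices that
delete the first or last coordinate. -/
theorem common_image_iff_reconstruction_special
    (l n : ℕ) (hl : 2 ≤ l) (hn : 1 ≤ n)
    (x y : Fin n → Fin (l + 1) → ℝ)
    (hx : ∀ i, x i ≠ 0) (hy : ∀ i, y i ≠ 0) :
    (∀ i, (fun j : Fin l => x i j.succ) ≠ (0 : Fin l → ℝ) ∧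
        Sim (fun j : Fin l => x i j.succ) (fun j : Fin l => y i j.castSucc))
    ↔
    (∀ i, ∃ z : Fin (l + 2) → ℝ,
        z ∉ Submodule.span ℝ
          {Pi.single (0 : Fin (l + 2)) (1 : ℝ), Pi.single (Fin.last (l + 1)) (1 : ℝ)} ∧
        Sim (fun j : Fin (l + 1) => z j.castSucc) (x i) ∧
        Sim (fun j : Fin (l + 1) => z j.succ) (y i)) := by
  constructor
  · intro H i
    obtain ⟨hne, c, hc, hsim⟩ := H i
    -- z : first l+1 coords are x i, last coord is c * y i (last)
    refine ⟨fun k => if hk : k = Fin.last (l + 1) then c * y i (Fin.last l)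
        else x i (k.castPred hk), ?_, ?_, ?_⟩
    · -- not in span: tail of x nonzero gives middle coordinate nonzero
      rw [Function.ne_iff] at hne
      obtain ⟨j, hj⟩ := hne
      refine span_pair_aux2 _ (j.succ.castSucc) ?_ ?_ ?_
      · simp [Fin.ext_iff]
      · simp [Fin.ext_iff]; omega
      · have hL : (j.succ.castSucc : Fin (l + 2)) ≠ Fin.last (l + 1) := by
          simp [Fin.ext_iff]; omega
        simpa only [hL, ↓reduceDIte, Fin.castPred_castSucc, Pi.zero_apply, ne_eq] using hj
    · refine ⟨1, one_ne_zero, funext fun j => ?_⟩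
      have hL : (j.castSucc : Fin (l + 2)) ≠ Fin.last (l + 1) := by
        simp [Fin.ext_iff]; omega
      simp [hL]
    · refine ⟨c, hc, funext fun j => ?_⟩
      by_cases hjL : j = Fin.last l
      · subst hjL
        simp
      · have hjlt : (j : ℕ) < l := by
          have := j.isLt
          simp [Fin.ext_iff] at hjL
          omega
        have hL : (j.succ : Fin (l + 2)) ≠ Fin.last (l + 1) := by
          simp [Fin.ext_iff]; omega
        have h1 : (j.succ.castPred hL) = (⟨j, hjlt⟩ : Fin l).succ := by
          simp [Fin.ext_iff]
        have h2 : (⟨j, hjlt⟩ : Fin l).castSucc = j := by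
          simp [Fin.ext_iff]
        have h3 := congrFun hsim (⟨j, hjlt⟩ : Fin l)
        simp only [Pi.smul_apply, smul_eq_mul] at h3
        rw [h2] at h3
        simp only [Pi.smul_apply, smul_eq_mul]
        rw [dif_neg hL, h1]
        exact h3
  · intro H i
    obtain ⟨z, hz, ⟨a, ha, hxa⟩, ⟨b, hb, hyb⟩⟩ := H i
    have hza : ∀ k : Fin (l + 1), z k.castSucc = a * x i k := by
      intro k
      have := congrFun hxa k
      simpa using this
    have hzb : ∀ k : Fin (l + 1), z k.succ = b * y i k := by
      intro k
      have := congrFun hyb k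
      simpa using this
    have hmid : ∃ k : Fin (l + 2), k ≠ 0 ∧ k ≠ Fin.last (l + 1) ∧ z k ≠ 0 := by
      by_contra hcon
      push_neg at hcon
      exact hz (span_pair_aux z (fun k h0 hL => hcon k h0 hL))
    obtain ⟨k, hk0, hkL, hzk⟩ := hmid
    have hk0' : (k : ℕ) ≠ 0 := by intro h; exact hk0 (Fin.ext (by simpa using h))
    have hkL' : (k : ℕ) ≠ l + 1 := by simpa [Fin.ext_iff] using hkL
    have hklt : (k : ℕ) - 1 < l := by have := k.isLt; omega
    set j0 : Fin l := ⟨(k : ℕ) - 1, hklt⟩ with hj0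
    have hkj : k = (j0.succ).castSucc := by
      simp [Fin.ext_iff, hj0]; omega
    have hkey : ∀ j : Fin l, a * x i j.succ = b * y i j.castSucc := by
      intro j
      have h1 := hza j.succ
      have h2 := hzb j.castSucc
      rw [Fin.succ_castSucc] at h2
      rw [h1] at h2
      exact h2
    constructor
    · rw [Function.ne_iff]
      refine ⟨j0, ?_⟩
      simp only [Pi.zero_apply]
      intro h0
      rw [hkj] at hzk
      rw [hza j0.succ, h0, mul_zero] at hzk
      exact hzk rfl
    · refine ⟨b / a, div_ne_zero hb ha, funext fun j => ?_⟩
      have := hkey j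
      simp only [Pi.smul_apply, smul_eq_mul]
      field_simp
      linarith [this]
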